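/- Let K, L ⊂ ℝ be non-empty bounded sets and α = m/q, β = p/q with m, p, q positive integers and α + β ≤ 1. Then G_1(αK + βL + [−(q−1)/q, (q−1)/q]) ≥ αG_1(K) + βG_1(L). -/

import Mathlib

open Set
open scoped Pointwise

/-- The lattice point enumerator on `ℝ`. -/
noncomputable def latticeEnum1 (M : Set ℝ) : ℕ := (M ∩ {x : ℝ | ∃ z : ℤ, x = z}).ncard

namespace Stmt11Aux

open Finset


lemma exists_ceil (q a : ℤ) (hq : 0 < q) : ∃ M : ℤ, a ≤ q * M ∧ q * M ≤ a + q - 1 := by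
  refine ⟨-((-a) / q), ?_, ?_⟩ <;>
  · have h1 := Int.mul_ediv_add_emod (-a) q
    have h2 := Int.emod_nonneg (-a) (ne_of_gt hq)
    have h3 := Int.emod_lt_of_pos (-a) hq
    have : q * (-((-a)/q)) = -(q * ((-a)/q)) := by ring
    rw [this]
    linarith

lemma core (q lam : ℤ) (hq : 2 ≤ q) (hlam1 : q - 2 ≤ lam) (hlam2 : lam ≤ q - 1)
    (d w : ℕ → ℤ) (hw0 : w 0 ≤ lam + 1) (hwpos : ∀ i, 1 ≤ w i)
    (hws : ∀ i, w (i + 1) ≤ q - 1) :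
    ∀ n : ℕ, (∀ i, i < n → d i + w (i + 1) ≤ d (i + 1)) →
    ∃ (T : Finset ℤ) (M : ℤ),
      (∀ z ∈ T, ∃ i, i ≤ n ∧ d i - lam ≤ q * z ∧ q * z ≤ d i + q - 1) ∧
      (∀ z ∈ T, z ≤ M) ∧
      d n ≤ q * M ∧ q * M ≤ d n + q - 1 ∧
      (∑ i ∈ Finset.range (n + 1), w i) + (q * M - d n) ≤ q * T.card := by
  intro n
  induction n with
  | zero =>
    intro _
    obtain ⟨M, hM1, hM2⟩ := exists_ceil q (d 0) (by linarith)
    by_cases hc : d 0 - lam ≤ q * (M - 1)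
    · refine ⟨{M - 1, M}, M, ?_, ?_, hM1, hM2, ?_⟩
      · intro z hz
        simp only [Finset.mem_insert, Finset.mem_singleton] at hz
        rcases hz with rfl | rfl
        · exact ⟨0, le_refl 0, hc, by nlinarith⟩
        · exact ⟨0, le_refl 0, by linarith, hM2⟩
      · intro z hz
        simp only [Finset.mem_insert, Finset.mem_singleton] at hz
        rcases hz with rfl | rfl <;> omega
      · have hcard : ({M - 1, M} : Finset ℤ).card = 2 := by
          rw [Finset.card_insert_of_notMem (by simp), Finset.card_singleton]
        rw [hcard, Finset.sum_range_one]
        push_cast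
        linarith
    · refine ⟨{M}, M, ?_, ?_, hM1, hM2, ?_⟩
      · intro z hz
        simp only [Finset.mem_singleton] at hz
        subst hz
        exact ⟨0, le_refl 0, by linarith, hM2⟩
      · intro z hz; simp only [Finset.mem_singleton] at hz; omega
      · rw [Finset.card_singleton, Finset.sum_range_one]
        have : q * (M - 1) = q * M - q := by ring
        rw [this] at hc
        push_neg at hc
        -- q*M < d 0 - lam + q, so q*M - d 0 ≤ q - lam - 1, w 0 ≤ lam+1
        push_cast
        linarith
  | succ n ih =>
    intro hgap
    obtain ⟨T, M, hcov, hle, hMl, hMu, hsum⟩ := ih (fun i hi => hgap i (by omega))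
    obtain ⟨M', hM'1, hM'2⟩ := exists_ceil q (d (n+1)) (by linarith)
    obtain ⟨A', hA'1, hA'2⟩ := exists_ceil q (d (n+1) - lam) (by linarith)
    have hdlt : d n + w (n+1) ≤ d (n+1) := hgap n (by omega)
    have hwn : 1 ≤ w (n+1) := hwpos (n+1)
    have hwn' : w (n+1) ≤ q - 1 := hws n
    have hMM' : M ≤ M' := by nlinarith
    have hA'M' : A' ≤ M' := by nlinarith
    set a : ℤ := max (M + 1) A' with ha
    refine ⟨T ∪ Finset.Icc a M', M', ?_, ?_, hM'1, hM'2, ?_⟩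
    · intro z hz
      rcases Finset.mem_union.mp hz with hz | hz
      · obtain ⟨i, hi, h1, h2⟩ := hcov z hz
        exact ⟨i, by omega, h1, h2⟩
      · rw [Finset.mem_Icc] at hz
        refine ⟨n+1, le_refl _, ?_, ?_⟩
        · have : q * A' ≤ q * z := by
            apply mul_le_mul_of_nonneg_left _ (by linarith)
            exact le_trans (le_max_right _ _) hz.1
          linarith
        · have : q * z ≤ q * M' := by
            apply mul_le_mul_of_nonneg_left hz.2 (by linarith)
          linarith
    · intro z hz
      rcases Finset.mem_union.mp hz with hz | hz
      · exact le_trans (hle z hz) hMM'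
      · exact (Finset.mem_Icc.mp hz).2
    · have hdisj : Disjoint T (Finset.Icc a M') := by
        rw [Finset.disjoint_left]
        intro z hz hz'
        have h1 := hle z hz
        have h2 := (Finset.mem_Icc.mp hz').1
        have : M + 1 ≤ a := le_max_left _ _
        omega
      rw [Finset.card_union_of_disjoint hdisj, Finset.sum_range_succ]
      have hicc : (Finset.Icc a M').card = (M' + 1 - a).toNat := Int.card_Icc a M'
      rcases le_or_gt A' (M + 1) with hcase | hcase
      · -- a = M + 1
        have haeq : a = M + 1 := max_eq_left hcase
        have hcardval : ((Finset.Icc a M').card : ℤ) = M' - M := by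
          rw [hicc, haeq, Int.toNat_of_nonneg (by omega)]
          ring
        push_cast [hcardval]
        push_cast at hsum
        nlinarith
      · -- a = A'
        have haeq : a = A' := max_eq_right (by omega)
        have hcardval : ((Finset.Icc a M').card : ℤ) = M' + 1 - A' := by
          rw [hicc, haeq, Int.toNat_of_nonneg (by omega)]
        push_cast [hcardval]
        push_cast at hsum
        nlinarith


lemma bridge (q : ℕ) (hq : 2 ≤ q) (n : ℕ) (c : ℕ → ℝ) (w : ℕ → ℤ)
    (hfr : ∀ i, i ≤ n → Int.fract (c i) = Int.fract (c 0))
    (hw0q : (w 0 : ℝ) ≤ q)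
    (hw0q' : Int.fract (c 0) ≠ 0 → (w 0 : ℝ) ≤ (q : ℝ) - 1)
    (hwpos : ∀ i, 1 ≤ w i)
    (hws : ∀ i, (w (i + 1) : ℝ) ≤ (q : ℝ) - 1)
    (hgap : ∀ i, i < n → c i + (w (i + 1) : ℝ) ≤ c (i + 1)) :
    ∃ T : Finset ℤ,
      (∀ z ∈ T, ∃ i, i ≤ n ∧ |(q : ℝ) * z - c i| ≤ (q : ℝ) - 1) ∧
      ((∑ i ∈ Finset.range (n + 1), (w i : ℝ)) ≤ (q : ℝ) * T.card) := by
  set θ : ℝ := Int.fract (c 0) with hθ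
  have hθ0 : 0 ≤ θ := Int.fract_nonneg _
  have hθ1 : θ < 1 := Int.fract_lt_one _
  set lam : ℤ := if θ = 0 then (q : ℤ) - 1 else (q : ℤ) - 2 with hlam
  have hlam1 : (q : ℤ) - 2 ≤ lam := by rw [hlam]; split <;> omega
  have hlam2 : lam ≤ (q : ℤ) - 1 := by rw [hlam]; split <;> omega
  set d : ℕ → ℤ := fun i => ⌊c i⌋ with hd
  have hcd : ∀ i, i ≤ n → c i = (d i : ℝ) + θ := by
    intro i hi
    have := hfr i hi
    rw [hd]
    have h2 : Int.fract (c i) = c i - ⌊c i⌋ := (Int.self_sub_floor (c i)).symm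
    simp only [← hθ] at this ⊢
    rw [← this, h2]
    ring
  have hq' : (2 : ℤ) ≤ (q : ℤ) := by exact_mod_cast hq
  have hqR : (0 : ℝ) < q := by positivity
  have hw0 : w 0 ≤ lam + 1 := by
    rw [hlam]
    split
    · have h1 : ((w 0 : ℤ) : ℝ) ≤ ((q : ℤ) : ℝ) := by push_cast; linarith
      have h2 : (w 0 : ℤ) ≤ (q : ℤ) := by exact_mod_cast h1
      omega
    · next h =>
      have := hw0q' h
      have : ((w 0 : ℤ) : ℝ) ≤ (((q : ℤ) - 1 : ℤ) : ℝ) := by push_cast; linarith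
      have := (Int.cast_le (R := ℝ)).mp this
      omega
  have hwsZ : ∀ i, w (i + 1) ≤ (q : ℤ) - 1 := by
    intro i
    have : ((w (i + 1) : ℤ) : ℝ) ≤ (((q : ℤ) - 1 : ℤ) : ℝ) := by push_cast; exact_mod_cast hws i
    exact (Int.cast_le (R := ℝ)).mp this
  have hgapZ : ∀ i, i < n → d i + w (i + 1) ≤ d (i + 1) := by
    intro i hi
    have h1 := hgap i hi
    rw [hcd i (by omega), hcd (i + 1) (by omega)] at h1
    have : ((d i + w (i + 1) : ℤ) : ℝ) ≤ ((d (i + 1) : ℤ) : ℝ) := by push_cast; linarith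
    exact_mod_cast this
  obtain ⟨T, M, hcov, hle, hM1, hM2, hsum⟩ :=
    core (q : ℤ) lam hq' hlam1 hlam2 d w hw0 hwpos hwsZ n hgapZ
  refine ⟨T, ?_, ?_⟩
  · intro z hz
    obtain ⟨i, hi, h1, h2⟩ := hcov z hz
    refine ⟨i, hi, ?_⟩
    rw [abs_le]
    have h1R : ((d i : ℤ) : ℝ) - lam ≤ (q : ℝ) * z := by exact_mod_cast h1
    have h2R : (q : ℝ) * z ≤ ((d i : ℤ) : ℝ) + (q : ℝ) - 1 := by
      have : ((q * z : ℤ) : ℝ) ≤ ((d i + q - 1 : ℤ) : ℝ) := by exact_mod_cast h2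
      push_cast at this ⊢
      linarith
    have hci := hcd i hi
    constructor
    · -- lower
      have hlamR : (lam : ℝ) + θ ≤ (q : ℝ) - 1 := by
        rw [hlam]
        split
        · next h =>
            push_cast
            have h' : θ = 0 := by rw [hθ]; exact_mod_cast h
            rw [h']
            linarith
        · push_cast
          linarith
      rw [hci]; linarith
    · rw [hci]; linarith
  · have hsum2 : (∑ i ∈ Finset.range (n + 1), w i) ≤ (q : ℤ) * T.card := by linarith
    have : ((∑ i ∈ Finset.range (n + 1), w i : ℤ) : ℝ) ≤ (((q : ℤ) * T.card : ℤ) : ℝ) := by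
      exact_mod_cast hsum2
    push_cast at this
    linarith


lemma inter_lattice_eq_image (S : Set ℝ) :
    S ∩ {x : ℝ | ∃ z : ℤ, x = z} = (fun a : ℤ => (a : ℝ)) '' {a : ℤ | (a : ℝ) ∈ S} := by
  ext x
  constructor
  · rintro ⟨hx, z, rfl⟩
    exact ⟨z, hx, rfl⟩
  · rintro ⟨a, ha, rfl⟩
    exact ⟨ha, a, rfl⟩

lemma lattice_finite (S : Set ℝ) (hS : Bornology.IsBounded S) :
    {a : ℤ | (a : ℝ) ∈ S}.Finite := by
  obtain ⟨C, hC⟩ := isBounded_iff_forall_norm_le.mp hS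
  apply Set.Finite.subset (Set.finite_Icc (⌈-C⌉) (⌊C⌋))
  intro a ha
  have := hC _ ha
  rw [Real.norm_eq_abs, abs_le] at this
  constructor
  · exact Int.ceil_le.mpr (by exact_mod_cast this.1)
  · exact Int.le_floor.mpr (by exact_mod_cast this.2)

lemma latticeEnum1_eq (S : Set ℝ) : latticeEnum1 S = {a : ℤ | (a : ℝ) ∈ S}.ncard := by
  rw [latticeEnum1, inter_lattice_eq_image]
  exact Set.ncard_image_of_injective _ Int.cast_injective

lemma card_le_latticeEnum1 (S : Set ℝ) (hS : Bornology.IsBounded S) (T : Finset ℤ)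
    (hT : ∀ z ∈ T, ((z : ℝ)) ∈ S) : T.card ≤ latticeEnum1 S := by
  rw [latticeEnum1_eq]
  have hsub : (T : Set ℤ) ⊆ {a : ℤ | (a : ℝ) ∈ S} := fun z hz => hT z hz
  calc T.card = (T : Set ℤ).ncard := (Set.ncard_coe_finset T).symm
    _ ≤ _ := Set.ncard_le_ncard hsub (lattice_finite S hS)

/-- single-family chain: moving integer family `B` with coefficient `pp`,
fixed real point `x` with coefficient `mm`. -/
lemma branchline (q mm pp : ℕ) (hq : 2 ≤ q) (hmm : 0 < mm) (hpp : 0 < pp)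
    (hmp : mm + pp ≤ q) (s : ℕ) (hs : 1 ≤ s) (x : ℝ) (B : ℕ → ℤ)
    (hBstep : ∀ j, j + 1 ≤ s - 1 → B j + 1 ≤ B (j + 1)) :
    ∃ T : Finset ℤ,
      (∀ z ∈ T, ∃ j, j ≤ s - 1 ∧
        |(q : ℝ) * z - ((mm : ℝ) * x + (pp : ℝ) * (B j : ℝ))| ≤ (q : ℝ) - 1) ∧
      ((pp : ℝ) * s ≤ (q : ℝ) * T.card) := by
  have hppq : pp ≤ q - 1 := by omega
  set c : ℕ → ℝ := fun j => (mm : ℝ) * x + (pp : ℝ) * (B (min j (s - 1)) : ℝ) with hc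
  set w : ℕ → ℤ := fun _ => (pp : ℤ) with hw
  obtain ⟨T, hcov, hsum⟩ := bridge q hq (s - 1) c w
    (by
      intro i hi
      rw [Int.fract_eq_fract]
      exact ⟨(pp : ℤ) * (B (min i (s - 1)) - B (min 0 (s - 1))), by push_cast; ring⟩)
    (by
      show ((pp : ℤ) : ℝ) ≤ q
      push_cast
      exact_mod_cast Nat.le_of_lt_succ (by omega : pp < q + 1))
    (by
      intro _
      show ((pp : ℤ) : ℝ) ≤ (q : ℝ) - 1
      have : (pp : ℝ) + 1 ≤ q := by exact_mod_cast (by omega : pp + 1 ≤ q)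
      push_cast
      linarith)
    (fun i => by show (1:ℤ) ≤ (pp:ℤ); exact_mod_cast hpp)
    (fun i => by
      show ((pp : ℤ) : ℝ) ≤ (q : ℝ) - 1
      have : (pp : ℝ) + 1 ≤ q := by exact_mod_cast (by omega : pp + 1 ≤ q)
      push_cast; linarith)
    (by
      intro i hi
      show (mm : ℝ) * x + (pp : ℝ) * (B (min i (s - 1)) : ℝ) + ((pp : ℤ) : ℝ) ≤
        (mm : ℝ) * x + (pp : ℝ) * (B (min (i + 1) (s - 1)) : ℝ)
      have e1 : min i (s - 1) = i := by omega
      have e2 : min (i + 1) (s - 1) = i + 1 := by omega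
      rw [e1, e2]
      have hB := hBstep i (by omega)
      have : (pp : ℝ) * ((B i : ℝ) + 1) ≤ (pp : ℝ) * (B (i + 1) : ℝ) := by
        apply mul_le_mul_of_nonneg_left _ (by positivity)
        exact_mod_cast hB
      push_cast
      push_cast at this
      linarith)
  refine ⟨T, ?_, ?_⟩
  · intro z hz
    obtain ⟨i, hi, habs⟩ := hcov z hz
    exact ⟨min i (s - 1), by omega, habs⟩
  · have hsumeq : (∑ i ∈ Finset.range (s - 1 + 1), ((w i : ℤ) : ℝ)) = (pp : ℝ) * s := by
      have hcg : ∀ i ∈ Finset.range (s - 1 + 1), ((w i : ℤ) : ℝ) = (pp : ℝ) := by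
        intro i _
        simp [hw]
      have he : (∑ i ∈ Finset.range (s - 1 + 1), ((w i : ℤ) : ℝ))
          = ∑ _i ∈ Finset.range (s - 1 + 1), (pp : ℝ) := Finset.sum_congr rfl hcg
      rw [he, Finset.sum_const, Finset.card_range, nsmul_eq_mul]
      have hs1 : s - 1 + 1 = s := by omega
      rw [hs1]
      ring
    rw [hsumeq] at hsum
    exact hsum

/-- two-family chain -/
lemma branch4 (q m p : ℕ) (hq : 2 ≤ q) (hm : 0 < m) (hp : 0 < p) (hmp : m + p ≤ q)
    (r s : ℕ) (hr : 1 ≤ r) (hs : 1 ≤ s) (A B : ℕ → ℤ)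
    (hAstep : ∀ i, i + 1 ≤ r - 1 → A i + 1 ≤ A (i + 1))
    (hBstep : ∀ j, j + 1 ≤ s - 1 → B j + 1 ≤ B (j + 1)) :
    ∃ T : Finset ℤ,
      (∀ z ∈ T, ∃ i j : ℕ, i ≤ r - 1 ∧ j ≤ s - 1 ∧
        |(q : ℝ) * z - ((m : ℝ) * (A i : ℝ) + (p : ℝ) * (B j : ℝ))| ≤ (q : ℝ) - 1) ∧
      ((m : ℝ) * r + (p : ℝ) * s ≤ (q : ℝ) * T.card) := by
  have hm1 : (1 : ℤ) ≤ (m : ℤ) := by exact_mod_cast hm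
  have hp1 : (1 : ℤ) ≤ (p : ℤ) := by exact_mod_cast hp
  set n : ℕ := (r - 1) + (s - 1) with hn
  set A' : ℕ → ℤ := fun i => A (min i (r - 1)) with hA'
  set B' : ℕ → ℤ := fun j => B (min j (s - 1)) with hB'
  set dZ : ℕ → ℤ := fun i => (m : ℤ) * A' i + (p : ℤ) * B' (i - (r - 1)) with hdZ
  set c : ℕ → ℝ := fun i => ((dZ i : ℤ) : ℝ) with hc
  set w : ℕ → ℤ := fun i => if i = 0 then ((m : ℤ) + p) else if i ≤ r - 1 then (m : ℤ) else (p : ℤ)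
    with hwdef
  have hmq : (m : ℝ) + 1 ≤ q := by exact_mod_cast (by omega : m + 1 ≤ q)
  have hpq : (p : ℝ) + 1 ≤ q := by exact_mod_cast (by omega : p + 1 ≤ q)
  have hwval : ∀ i, w (i + 1) = if i + 1 ≤ r - 1 then (m : ℤ) else (p : ℤ) := by
    intro i
    simp only [hwdef, Nat.succ_ne_zero, if_false]
  have hgapZ : ∀ i, i < n → dZ i + w (i + 1) ≤ dZ (i + 1) := by
    intro i hi
    rw [hwval i]
    by_cases hir : i + 1 ≤ r - 1
    · rw [if_pos hir]
      have e0 : A' i = A i := by simp only [hA']; congr 1; omega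
      have e1 : A' (i + 1) = A (i + 1) := by simp only [hA']; congr 1; omega
      have e2 : (i + 1) - (r - 1) = i - (r - 1) := by omega
      simp only [hdZ, e2]
      rw [e0, e1]
      have hAA := hAstep i hir
      nlinarith [mul_le_mul_of_nonneg_left hAA (by linarith : (0:ℤ) ≤ (m:ℤ))]
    · rw [if_neg hir]
      have hire : r - 1 ≤ i := by omega
      have e0 : A' (i + 1) = A' i := by simp only [hA']; congr 1; omega
      set k : ℕ := i - (r - 1) with hk
      have e1 : (i + 1) - (r - 1) = k + 1 := by omega
      have hks : k + 1 ≤ s - 1 := by omega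
      have e2 : B' k = B k := by simp only [hB']; congr 1; omega
      have e3 : B' (k + 1) = B (k + 1) := by simp only [hB']; congr 1; omega
      simp only [hdZ, e1, e0, e2, e3]
      have hBB := hBstep k hks
      nlinarith [mul_le_mul_of_nonneg_left hBB (by linarith : (0:ℤ) ≤ (p:ℤ))]
  obtain ⟨T, hcov, hsum⟩ := bridge q hq n c w
    (by
      intro i hi
      simp only [hc, Int.fract_intCast])
    (by
      show (((m : ℤ) + p : ℤ) : ℝ) ≤ q
      push_cast
      exact_mod_cast (by exact_mod_cast hmp : (m : ℝ) + p ≤ q))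
    (by
      intro h
      exact absurd (Int.fract_intCast (dZ 0)) h)
    (by
      intro i
      simp only [hwdef]
      split_ifs <;> omega)
    (by
      intro i
      rw [hwval i]
      split_ifs
      · show ((m : ℤ) : ℝ) ≤ (q : ℝ) - 1
        push_cast; linarith
      · show ((p : ℤ) : ℝ) ≤ (q : ℝ) - 1
        push_cast; linarith)
    (by
      intro i hi
      have := hgapZ i hi
      simp only [hc]
      exact_mod_cast this)
  refine ⟨T, ?_, ?_⟩
  · intro z hz
    obtain ⟨i, hi, habs⟩ := hcov z hz
    refine ⟨min i (r - 1), min (i - (r - 1)) (s - 1), by omega, by omega, ?_⟩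
    have : c i = (m : ℝ) * (A (min i (r - 1)) : ℝ) + (p : ℝ) * (B (min (i - (r - 1)) (s - 1)) : ℝ) := by
      simp only [hc, hdZ, hA', hB']
      push_cast
      ring
    rw [this] at habs
    exact habs
  · have hsumZ : (∑ i ∈ Finset.range (n + 1), w i) = (m : ℤ) * r + (p : ℤ) * s := by
      rw [Finset.range_eq_Ico]
      rw [← Finset.sum_Ico_consecutive w (by omega : 0 ≤ r) (by omega : r ≤ n + 1)]
      rw [← Finset.sum_Ico_consecutive w (by omega : 0 ≤ 1) (by omega : 1 ≤ r)]
      have h1 : (∑ i ∈ Finset.Ico 0 1, w i) = (m : ℤ) + p := by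
        simp [hwdef]
      have h2 : (∑ i ∈ Finset.Ico 1 r, w i) = ((r - 1 : ℕ) : ℤ) * m := by
        have hcg : ∀ i ∈ Finset.Ico 1 r, w i = (m : ℤ) := by
          intro i hi
          rw [Finset.mem_Ico] at hi
          simp only [hwdef]
          rw [if_neg (by omega), if_pos (by omega)]
        rw [Finset.sum_congr rfl hcg, Finset.sum_const, Nat.card_Ico, nsmul_eq_mul]
      have h3 : (∑ i ∈ Finset.Ico r (n + 1), w i) = ((s - 1 : ℕ) : ℤ) * p := by
        have hcg : ∀ i ∈ Finset.Ico r (n + 1), w i = (p : ℤ) := by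
          intro i hi
          rw [Finset.mem_Ico] at hi
          simp only [hwdef]
          rw [if_neg (by omega), if_neg (by omega)]
        rw [Finset.sum_congr rfl hcg, Finset.sum_const, Nat.card_Ico, nsmul_eq_mul]
        congr 1
        have : n + 1 - r = s - 1 := by omega
        rw [this]
      rw [h1, h2, h3]
      have hr' : ((r - 1 : ℕ) : ℤ) = (r : ℤ) - 1 := by
        rw [Nat.cast_sub hr]; rfl
      have hs' : ((s - 1 : ℕ) : ℤ) = (s : ℤ) - 1 := by
        rw [Nat.cast_sub hs]; rfl
      rw [hr', hs']
      ring
    have : (∑ i ∈ Finset.range (n + 1), ((w i : ℤ) : ℝ)) = (m : ℝ) * r + (p : ℝ) * s := by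
      rw [← Int.cast_sum, hsumZ]
      push_cast
      ring
    rw [this] at hsum
    exact hsum

end Stmt11Aux

open Stmt11Aux Finset in
theorem stmt11 (K L : Set ℝ) (hK : K.Nonempty) (hL : L.Nonempty)
    (hKb : Bornology.IsBounded K) (hLb : Bornology.IsBounded L)
    (m p q : ℕ) (hm : 0 < m) (hp : 0 < p) (hq : 0 < q)
    (hαβ : (m : ℝ) / q + (p : ℝ) / q ≤ 1) :
    (latticeEnum1 (((m : ℝ) / q) • K + ((p : ℝ) / q) • L +
        Set.Icc (-(((q : ℝ) - 1) / q)) (((q : ℝ) - 1) / q)) : ℝ) ≥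
      (m : ℝ) / q * (latticeEnum1 K : ℝ) + (p : ℝ) / q * (latticeEnum1 L : ℝ) := by
  have hqR : (0 : ℝ) < q := by positivity
  have hmp : m + p ≤ q := by
    have h1 : (m : ℝ) + p ≤ q := by
      rw [← add_div, div_le_one hqR] at hαβ
      exact hαβ
    exact_mod_cast h1
  have hq2 : 2 ≤ q := by omega
  set S : Set ℝ := ((m : ℝ) / q) • K + ((p : ℝ) / q) • L +
      Set.Icc (-(((q : ℝ) - 1) / q)) (((q : ℝ) - 1) / q) with hS
  -- boundedness of S
  obtain ⟨CK, hCK⟩ := isBounded_iff_forall_norm_le.mp hKb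
  obtain ⟨CL, hCL⟩ := isBounded_iff_forall_norm_le.mp hLb
  obtain ⟨x₀, hx₀⟩ := hK
  obtain ⟨y₀, hy₀⟩ := hL
  have hCK0 : 0 ≤ CK := le_trans (norm_nonneg x₀) (hCK x₀ hx₀)
  have hCL0 : 0 ≤ CL := le_trans (norm_nonneg y₀) (hCL y₀ hy₀)
  have hα1 : (m : ℝ) / q ≤ 1 := by
    rw [div_le_one hqR]
    exact_mod_cast (by omega : m ≤ q)
  have hβ1 : (p : ℝ) / q ≤ 1 := by
    rw [div_le_one hqR]
    exact_mod_cast (by omega : p ≤ q)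
  have hα0 : (0 : ℝ) ≤ (m : ℝ) / q := by positivity
  have hβ0 : (0 : ℝ) ≤ (p : ℝ) / q := by positivity
  have hI1 : ((q : ℝ) - 1) / q ≤ 1 := by
    rw [div_le_one hqR]; linarith
  have hI0 : (0 : ℝ) ≤ ((q : ℝ) - 1) / q := by
    apply div_nonneg _ (le_of_lt hqR)
    have : (1 : ℝ) ≤ q := by exact_mod_cast (by omega : 1 ≤ q)
    linarith
  have hSb : Bornology.IsBounded S := by
    rw [isBounded_iff_forall_norm_le]
    refine ⟨CK + CL + 1, ?_⟩
    intro t ht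
    rw [hS, Set.mem_add] at ht
    obtain ⟨u, hu, e, he, heq⟩ := ht
    rw [Set.mem_add] at hu
    obtain ⟨a, ha, b, hb, heq2⟩ := hu
    rw [Set.mem_smul_set] at ha hb
    obtain ⟨xx, hxx, rfl⟩ := ha
    obtain ⟨yy, hyy, rfl⟩ := hb
    rw [Set.mem_Icc] at he
    have h1 : |xx| ≤ CK := by have := hCK xx hxx; rwa [Real.norm_eq_abs] at this
    have h2 : |yy| ≤ CL := by have := hCL yy hyy; rwa [Real.norm_eq_abs] at this
    have h3 : |e| ≤ 1 := by
      rw [abs_le]; exact ⟨by linarith [he.1], by linarith [he.2]⟩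
    rw [← heq, ← heq2, Real.norm_eq_abs, smul_eq_mul, smul_eq_mul]
    have h4 : |(m : ℝ) / q * xx| ≤ CK := by
      rw [abs_mul, abs_of_nonneg hα0]
      calc (m : ℝ) / q * |xx| ≤ 1 * CK := by
            apply mul_le_mul hα1 h1 (abs_nonneg _) (by norm_num)
        _ = CK := one_mul CK
    have h5 : |(p : ℝ) / q * yy| ≤ CL := by
      rw [abs_mul, abs_of_nonneg hβ0]
      calc (p : ℝ) / q * |yy| ≤ 1 * CL := by
            apply mul_le_mul hβ1 h2 (abs_nonneg _) (by norm_num)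
        _ = CL := one_mul CL
    calc |(m : ℝ) / q * xx + (p : ℝ) / q * yy + e|
        ≤ |(m : ℝ) / q * xx + (p : ℝ) / q * yy| + |e| := abs_add_le _ _
      _ ≤ (|(m : ℝ) / q * xx| + |(p : ℝ) / q * yy|) + |e| := by
          linarith [abs_add_le ((m : ℝ) / q * xx) ((p : ℝ) / q * yy)]
      _ ≤ CK + CL + 1 := by linarith
  -- generic membership
  have hmemS : ∀ x' y' : ℝ, x' ∈ K → y' ∈ L → ∀ z : ℤ,
      |(q : ℝ) * z - ((m : ℝ) * x' + (p : ℝ) * y')| ≤ (q : ℝ) - 1 → ((z : ℝ)) ∈ S := by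
    intro x' y' hx' hy' z hz
    have heq : (z : ℝ) = ((m : ℝ) / q) * x' + ((p : ℝ) / q) * y' +
        (((q : ℝ) * z - ((m : ℝ) * x' + (p : ℝ) * y')) / q) := by
      field_simp
      ring
    rw [hS, heq]
    refine Set.add_mem_add (Set.add_mem_add ?_ ?_) ?_
    · exact ⟨x', hx', smul_eq_mul ..⟩
    · exact ⟨y', hy', smul_eq_mul ..⟩
    · rw [Set.mem_Icc]
      have h := abs_le.mp hz
      constructor
      · rw [show -(((q : ℝ) - 1) / q) = (-((q : ℝ) - 1)) / q by ring]
        exact (div_le_div_iff_of_pos_right hqR).mpr (by linarith [h.1])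
      · exact (div_le_div_iff_of_pos_right hqR).mpr h.2
  -- lattice point counts as Finset cards
  have hfinK := lattice_finite K hKb
  have hfinL := lattice_finite L hLb
  set FK := hfinK.toFinset with hFK
  set FL := hfinL.toFinset with hFL
  have hlK : latticeEnum1 K = FK.card := by
    rw [latticeEnum1_eq, Set.ncard_eq_toFinset_card _ hfinK]
  have hlL : latticeEnum1 L = FL.card := by
    rw [latticeEnum1_eq, Set.ncard_eq_toFinset_card _ hfinL]
  -- reduce the goal
  rw [ge_iff_le, hlK, hlL]
  set r : ℕ := FK.card with hr
  set s' : ℕ := FL.card with hs'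
  suffices h : (m : ℝ) * r + (p : ℝ) * s' ≤ (q : ℝ) * (latticeEnum1 S) by
    rw [div_mul_eq_mul_div, div_mul_eq_mul_div, ← add_div, div_le_iff₀ hqR]
    linarith
  -- the enumerations
  have hAK : ∀ a : ℤ, a ∈ FK → ((a : ℝ)) ∈ K := by
    intro a ha
    rw [hFK, Set.Finite.mem_toFinset] at ha
    exact ha
  have hAL : ∀ a : ℤ, a ∈ FL → ((a : ℝ)) ∈ L := by
    intro a ha
    rw [hFL, Set.Finite.mem_toFinset] at ha
    exact ha
  rcases Nat.eq_zero_or_pos r with hr0 | hr1 <;> rcases Nat.eq_zero_or_pos s' with hs0 | hs1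
  · -- both empty
    rw [hr0, hs0]
    push_cast
    have : (0 : ℝ) ≤ (q : ℝ) * (latticeEnum1 S) := by positivity
    linarith
  · -- r = 0, L side nonempty : chain over FL
    have g : Fin s' ↪o ℤ := FL.orderEmbOfFin rfl
    set B : ℕ → ℤ := fun j => (FL.orderEmbOfFin rfl) ⟨min j (s' - 1), by omega⟩ with hB
    have hBstep : ∀ j, j + 1 ≤ s' - 1 → B j + 1 ≤ B (j + 1) := by
      intro j hj
      have hlt : B j < B (j + 1) := by
        simp only [hB]
        apply (FL.orderEmbOfFin rfl).strictMono
        rw [Fin.mk_lt_mk]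
        omega
      omega
    obtain ⟨T, hTcov, hTsum⟩ := branchline q m p hq2 hm hp hmp s' hs1 x₀ B hBstep
    have hTmem : ∀ z ∈ T, ((z : ℝ)) ∈ S := by
      intro z hz
      obtain ⟨j, hj, habs⟩ := hTcov z hz
      refine hmemS x₀ ((B j : ℝ)) hx₀ ?_ z habs
      apply hAL
      rw [hB]
      exact Finset.orderEmbOfFin_mem FL rfl _
    have hcard := card_le_latticeEnum1 S hSb T hTmem
    have hcardR : (T.card : ℝ) ≤ (latticeEnum1 S : ℝ) := by exact_mod_cast hcard
    rw [hr0]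
    push_cast
    have : (q : ℝ) * (T.card : ℝ) ≤ (q : ℝ) * (latticeEnum1 S : ℝ) := by
      apply mul_le_mul_of_nonneg_left hcardR (le_of_lt hqR)
    linarith
  · -- s' = 0, K side nonempty : chain over FK
    set A : ℕ → ℤ := fun i => (FK.orderEmbOfFin rfl) ⟨min i (r - 1), by omega⟩ with hA
    have hAstep : ∀ i, i + 1 ≤ r - 1 → A i + 1 ≤ A (i + 1) := by
      intro i hi
      have hlt : A i < A (i + 1) := by
        simp only [hA]
        apply (FK.orderEmbOfFin rfl).strictMono
        rw [Fin.mk_lt_mk]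
        omega
      omega
    obtain ⟨T, hTcov, hTsum⟩ := branchline q p m hq2 hp hm (by omega) r hr1 y₀ A hAstep
    have hTmem : ∀ z ∈ T, ((z : ℝ)) ∈ S := by
      intro z hz
      obtain ⟨j, hj, habs⟩ := hTcov z hz
      refine hmemS ((A j : ℝ)) y₀ ?_ hy₀ z ?_
      · apply hAK
        rw [hA]
        exact Finset.orderEmbOfFin_mem FK rfl _
      · convert habs using 2
        ring
    have hcard := card_le_latticeEnum1 S hSb T hTmem
    have hcardR : (T.card : ℝ) ≤ (latticeEnum1 S : ℝ) := by exact_mod_cast hcard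
    rw [hs0]
    push_cast
    have : (q : ℝ) * (T.card : ℝ) ≤ (q : ℝ) * (latticeEnum1 S : ℝ) := by
      apply mul_le_mul_of_nonneg_left hcardR (le_of_lt hqR)
    linarith
  · -- main case
    set A : ℕ → ℤ := fun i => (FK.orderEmbOfFin rfl) ⟨min i (r - 1), by omega⟩ with hA
    set B : ℕ → ℤ := fun j => (FL.orderEmbOfFin rfl) ⟨min j (s' - 1), by omega⟩ with hB
    have hAstep : ∀ i, i + 1 ≤ r - 1 → A i + 1 ≤ A (i + 1) := by
      intro i hi
      have hlt : A i < A (i + 1) := by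
        simp only [hA]
        apply (FK.orderEmbOfFin rfl).strictMono
        rw [Fin.mk_lt_mk]
        omega
      omega
    have hBstep : ∀ j, j + 1 ≤ s' - 1 → B j + 1 ≤ B (j + 1) := by
      intro j hj
      have hlt : B j < B (j + 1) := by
        simp only [hB]
        apply (FL.orderEmbOfFin rfl).strictMono
        rw [Fin.mk_lt_mk]
        omega
      omega
    obtain ⟨T, hTcov, hTsum⟩ := branch4 q m p hq2 hm hp hmp r s' hr1 hs1 A B hAstep hBstep
    have hTmem : ∀ z ∈ T, ((z : ℝ)) ∈ S := by
      intro z hz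
      obtain ⟨i, j, hi, hj, habs⟩ := hTcov z hz
      refine hmemS ((A i : ℝ)) ((B j : ℝ)) ?_ ?_ z habs
      · apply hAK
        rw [hA]
        exact Finset.orderEmbOfFin_mem FK rfl _
      · apply hAL
        rw [hB]
        exact Finset.orderEmbOfFin_mem FL rfl _
    have hcard := card_le_latticeEnum1 S hSb T hTmem
    have hcardR : (T.card : ℝ) ≤ (latticeEnum1 S : ℝ) := by exact_mod_cast hcard
    have : (q : ℝ) * (T.card : ℝ) ≤ (q : ℝ) * (latticeEnum1 S : ℝ) := by
      apply mul_le_mul_of_nonneg_left hcardR (le_of_lt hqR)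
    linarith
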